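/- arXiv:2204.05596 — 3 statements merged into one kernel-verified Lean document; each statement's English description precedes it below -/
import Mathlib

section
/- Let a ≥ 0, b ≥ 0, and 0 < r < 1, with the additional assumption that a = 0 implies b = 0. Then the function f(x) = (b + x²)/(a + x)^r is strictly convex on (0, 1]. -/
open Set

theorem stmt_7 (a b r : ℝ) (ha : 0 ≤ a) (hb : 0 ≤ b) (hr : 0 < r) (hr1 : r < 1)
    (hab : a = 0 → b = 0) :
    StrictConvexOn ℝ (Set.Ioc (0 : ℝ) 1)
      (fun x => (b + x ^ 2) / (a + x) ^ r) := by
  set g : ℝ → ℝ := fun x => (b + x ^ 2) * (a + x) ^ (-r) with hgdef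
  set g1 : ℝ → ℝ := fun x => 2 * x * (a + x) ^ (-r)
      + (b + x ^ 2) * (-r * (a + x) ^ (-r - 1)) with hg1def
  set g2 : ℝ → ℝ := fun x => 2 * (a + x) ^ (-r) - 4 * r * x * (a + x) ^ (-r - 1)
      + r * (r + 1) * (b + x ^ 2) * (a + x) ^ (-r - 2) with hg2def
  have hpos : ∀ x : ℝ, 0 < x → 0 < a + x := fun x hx => by linarith
  have hd1 : ∀ x : ℝ, 0 < x → HasDerivAt g (g1 x) x := by
    intro x hx
    have h1 : HasDerivAt (fun y : ℝ => a + y) 1 x := (hasDerivAt_id x).const_add a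
    have h2 : HasDerivAt (fun y : ℝ => (a + y) ^ (-r)) (1 * (-r) * (a + x) ^ (-r - 1)) x := by
      have := h1.rpow_const (p := -r) (Or.inl (hpos x hx).ne')
      convert this using 2
    have h3 : HasDerivAt (fun y : ℝ => b + y ^ 2) (2 * x) x := by
      simpa using (hasDerivAt_pow 2 x).const_add b
    have : HasDerivAt (fun y => (b + y ^ 2) * (a + y) ^ (-r)) _ x := h3.mul h2
    convert this using 1
    simp [hg1def]
  have hd2 : ∀ x : ℝ, 0 < x → HasDerivAt g1 (g2 x) x := by
    intro x hx
    have hax := hpos x hx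
    have h1 : HasDerivAt (fun y : ℝ => a + y) 1 x := (hasDerivAt_id x).const_add a
    have h2 : HasDerivAt (fun y : ℝ => (a + y) ^ (-r)) (1 * (-r) * (a + x) ^ (-r - 1)) x := by
      have := h1.rpow_const (p := -r) (Or.inl hax.ne')
      convert this using 2
    have h2' : HasDerivAt (fun y : ℝ => (a + y) ^ (-r - 1))
        (1 * (-r - 1) * (a + x) ^ (-r - 2)) x := by
      have := h1.rpow_const (p := -r - 1) (Or.inl hax.ne')
      convert this using 2
      ring_nf
    have h3 : HasDerivAt (fun y : ℝ => b + y ^ 2) (2 * x) x := by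
      simpa using (hasDerivAt_pow 2 x).const_add b
    have h4 : HasDerivAt (fun y : ℝ => 2 * y) 2 x := by
      simpa using (hasDerivAt_id x).const_mul 2
    have hA := h4.mul h2
    have hB := h3.mul (h2'.const_mul (-r))
    have : HasDerivAt (fun y => 2 * y * (a + y) ^ (-r) + (b + y ^ 2) * (-r * (a + y) ^ (-r - 1))) _ x := hA.add hB
    convert this using 1
    have : (-r - 1 - 1 : ℝ) = -r - 2 := by ring
    simp [hg2def, this]; ring
  have key : StrictConvexOn ℝ (Set.Ioc (0 : ℝ) 1) g := by
    apply strictConvexOn_of_deriv2_pos (convex_Ioc 0 1)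
    · apply ContinuousOn.mul
      · fun_prop
      · apply ContinuousOn.rpow_const
        · fun_prop
        · exact fun x hx => Or.inl (hpos x hx.1).ne'
    · intro x hx
      rw [interior_Ioc] at hx
      have hx0 : 0 < x := hx.1
      have hax := hpos x hx0
      have hev : deriv g =ᶠ[nhds x] g1 := by
        filter_upwards [IsOpen.mem_nhds isOpen_Ioi hx0] with y hy
        exact (hd1 y hy).deriv
      have : deriv^[2] g x = g2 x := by
        rw [Function.iterate_succ, Function.iterate_one, Function.comp_apply,
          hev.deriv_eq, (hd2 x hx0).deriv]
      rw [this]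
      -- rewrite powers
      set t : ℝ := a + x with htdef
      have e1 : t ^ (-r) = t ^ (-r - 2) * t ^ 2 := by
        rw [← Real.rpow_natCast t 2, ← Real.rpow_add hax]
        norm_num
      have e2 : t ^ (-r - 1) = t ^ (-r - 2) * t := by
        rw [show (-r - 1 : ℝ) = (-r - 2) + 1 by ring, Real.rpow_add hax, Real.rpow_one]
      have hq : (0 : ℝ) < 2 * t ^ 2 - 4 * r * x * t + r * (r + 1) * (b + x ^ 2) := by
        nlinarith [sq_nonneg (t - r * x), mul_pos hx0 hx0, mul_pos hr (sub_pos.mpr hr1),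
          mul_nonneg (mul_nonneg hr.le (by linarith : (0:ℝ) ≤ r + 1)) hb]
      have hrp : 0 < t ^ (-r - 2) := Real.rpow_pos_of_pos hax _
      have : g2 x = t ^ (-r - 2) * (2 * t ^ 2 - 4 * r * x * t + r * (r + 1) * (b + x ^ 2)) := by
        simp only [hg2def, ← htdef, e1, e2]; ring
      rw [this]
      exact mul_pos hrp hq
  obtain ⟨hc, hineq⟩ := key
  have heq : ∀ x ∈ Set.Ioc (0 : ℝ) 1, (b + x ^ 2) / (a + x) ^ r = g x := by
    intro x hx
    show (b + x ^ 2) / (a + x) ^ r = (b + x ^ 2) * (a + x) ^ (-r)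
    rw [Real.rpow_neg (hpos x hx.1).le, div_eq_mul_inv]
  refine ⟨hc, fun x hx y hy hxy p q hp hq hpq => ?_⟩
  simp only [heq x hx, heq y hy, heq _ (hc hx hy hp.le hq.le hpq)]
  exact hineq hx hy hxy hp hq hpq
end

section
/- Let P' ∈ ℝ^{B×C} be a row-stochastic non-negative matrix, fix a row index k, let c* = argmin_d Σ_{i≠k} P'_{id}, and let P* be obtained from P' by replacing row k with the one-hot vector e_{c*}. Then Σ_{i≠j} Σ_c P*_{ic} P*_{jc} ≤ Σ_{i≠j} Σ_c P'_{ic} P'_{jc}. -/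
open Finset

lemma split_sum {B : ℕ} (F : Fin B → Fin B → ℝ) (k : Fin B) :
    ∑ i, ∑ j ∈ Finset.univ.erase i, F i j =
      ∑ j ∈ Finset.univ.erase k, F k j + ∑ i ∈ Finset.univ.erase k, F i k
        + ∑ i ∈ Finset.univ.erase k, ∑ j ∈ (Finset.univ.erase i).erase k, F i j := by
  rw [← Finset.sum_erase_add _ _ (Finset.mem_univ k)]
  have h : ∀ i ∈ Finset.univ.erase k,
      ∑ j ∈ Finset.univ.erase i, F i j
        = ∑ j ∈ (Finset.univ.erase i).erase k, F i j + F i k := by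
    intro i hi
    rw [Finset.sum_erase_add]
    exact Finset.mem_erase.2 ⟨(Finset.mem_erase.1 hi).1.symm, Finset.mem_univ k⟩
  rw [Finset.sum_congr rfl h, Finset.sum_add_distrib]
  ring

theorem stmt_11 {B C : ℕ} (P' : Matrix (Fin B) (Fin C) ℝ)
    (hpos : ∀ i c, 0 ≤ P' i c) (hrow : ∀ i, ∑ c, P' i c = 1)
    (k : Fin B) (cstar : Fin C)
    (hcstar : ∀ d : Fin C, ∑ i ∈ Finset.univ.erase k, P' i cstar ≤
      ∑ i ∈ Finset.univ.erase k, P' i d)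
    (Pstar : Matrix (Fin B) (Fin C) ℝ)
    (hPstar : Pstar = Function.update P' k (fun c => if c = cstar then 1 else 0)) :
    ∑ i, ∑ j ∈ Finset.univ.erase i, ∑ c, Pstar i c * Pstar j c ≤
      ∑ i, ∑ j ∈ Finset.univ.erase i, ∑ c, P' i c * P' j c := by
  subst hPstar
  set Q := Function.update P' k (fun c => if c = cstar then 1 else 0) with hQ
  have hQk : ∀ c, Q k c = if c = cstar then 1 else 0 := by
    intro c; rw [hQ]; exact congrFun (Function.update_self k (fun c => if c = cstar then (1:ℝ) else 0) (P' : Fin B → Fin C → ℝ)) c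
  have hQne : ∀ i, i ≠ k → Q i = P' i := by
    intro i hi; rw [hQ]; exact Function.update_of_ne hi _ _
  set g : Fin C → ℝ := fun d => ∑ i ∈ Finset.univ.erase k, P' i d with hg
  rw [split_sum (fun i j => ∑ c, Q i c * Q j c) k,
      split_sum (fun i j => ∑ c, P' i c * P' j c) k]
  have hmem : ∀ i ∈ Finset.univ.erase k, i ≠ k := fun i hi => (Finset.mem_erase.1 hi).1
  -- third terms equal
  have h3 : ∑ i ∈ Finset.univ.erase k, ∑ j ∈ (Finset.univ.erase i).erase k, ∑ c, Q i c * Q j c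
      = ∑ i ∈ Finset.univ.erase k, ∑ j ∈ (Finset.univ.erase i).erase k, ∑ c, P' i c * P' j c := by
    refine Finset.sum_congr rfl fun i hi => Finset.sum_congr rfl fun j hj => ?_
    rw [hQne i (hmem i hi), hQne j (Finset.mem_erase.1 hj).1]
  -- first term of Q
  have h1 : ∑ j ∈ Finset.univ.erase k, ∑ c, Q k c * Q j c = g cstar := by
    refine Finset.sum_congr rfl fun j hj => ?_
    rw [hQne j (hmem j hj)]
    simp [hQk, ite_mul, Finset.sum_ite_eq']
  have h2 : ∑ i ∈ Finset.univ.erase k, ∑ c, Q i c * Q k c = g cstar := by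
    refine Finset.sum_congr rfl fun j hj => ?_
    rw [hQne j (hmem j hj)]
    simp [hQk, mul_ite, Finset.sum_ite_eq']
  -- first term of P'
  have h1' : ∑ j ∈ Finset.univ.erase k, ∑ c, P' k c * P' j c = ∑ c, P' k c * g c := by
    rw [Finset.sum_comm]
    exact Finset.sum_congr rfl fun c _ => by rw [← Finset.mul_sum]
  have h2' : ∑ i ∈ Finset.univ.erase k, ∑ c, P' i c * P' k c = ∑ c, P' k c * g c := by
    rw [Finset.sum_comm]
    refine Finset.sum_congr rfl fun c _ => ?_
    rw [← Finset.sum_mul, mul_comm]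
  have key : g cstar ≤ ∑ c, P' k c * g c := by
    calc g cstar = (∑ c, P' k c) * g cstar := by rw [hrow k, one_mul]
    _ = ∑ c, P' k c * g cstar := by rw [Finset.sum_mul]
    _ ≤ ∑ c, P' k c * g c :=
        Finset.sum_le_sum fun c _ => mul_le_mul_of_nonneg_left (hcstar c) (hpos k c)
  rw [h3]
  have := key
  simp only [h1, h2, h1', h2']
  linarith
end

section
/- For a row-stochastic matrix P ∈ ℝ^{B×C} with one-hot rows, ‖P‖_* = C · CWS(P)|_{r=1/2}, where CWS(P) = (1/C) Σ_{c=1}^C (Σ_i P_{ic}²)/(Σ_i P_{ic})^{1/2} (with the convention that a class term is 0 when its class size is 0). -/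
open Finset Matrix

/-- A vector is one-hot if it equals some standard basis vector. -/
def IsOneHot {C : ℕ} (v : Fin C → ℝ) : Prop :=
  ∃ c : Fin C, v = fun d => if d = c then 1 else 0

/-- The nuclear norm of a real matrix: `Tr √(Pᴴ P)`, the sum of singular values. -/
noncomputable def nuclearNorm {B C : ℕ} (P : Matrix (Fin B) (Fin C) ℝ) : ℝ :=
  ((Matrix.posSemidef_conjTranspose_mul_self P).1.eigenvectorUnitary.1 *
    diagonal ((RCLike.ofReal : ℝ → ℝ) ∘ (√·) ∘ (Matrix.posSemidef_conjTranspose_mul_self P).1.eigenvalues) *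
    (star (Matrix.posSemidef_conjTranspose_mul_self P).1.eigenvectorUnitary :
      Matrix (Fin C) (Fin C) ℝ)).trace

/-- The class weighted squares objective with parameter `r`
(with the convention `0 / 0 = 0` when a class size vanishes). -/
noncomputable def CWS {B C : ℕ} (r : ℝ) (P : Matrix (Fin B) (Fin C) ℝ) : ℝ :=
  (1 / C) * ∑ c, (∑ i, (P i c) ^ 2) / (∑ i, P i c) ^ r

theorem stmt_16 {B C : ℕ} (P : Matrix (Fin B) (Fin C) ℝ)
    (hpos : ∀ i c, 0 ≤ P i c) (hrow : ∀ i, ∑ c, P i c = 1)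
    (hP : ∀ i, IsOneHot (P i)) :
    nuclearNorm P = C * CWS (1 / 2 : ℝ) P := by
  rcases Nat.eq_zero_or_pos C with hC | hC
  · subst hC
    simp [nuclearNorm, Matrix.trace, CWS]
  set n : Fin C → ℝ := fun c => ∑ i, P i c with hn
  have h01 : ∀ i c, P i c = 0 ∨ P i c = 1 := by
    intro i c
    obtain ⟨c', hc'⟩ := hP i
    by_cases h : c = c' <;> simp [hc', h]
  have hsq : ∀ i c, (P i c) ^ 2 = P i c := by
    intro i c; rcases h01 i c with h | h <;> simp [h]
  have hmul0 : ∀ i c d, c ≠ d → P i c * P i d = 0 := by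
    intro i c d hcd
    obtain ⟨c', hc'⟩ := hP i
    by_cases h : c = c'
    · have : d ≠ c' := by rintro rfl; exact hcd h
      simp [hc', this]
    · simp [hc', h]
  have hnnn : ∀ c, 0 ≤ n c := fun c => Finset.sum_nonneg fun i _ => hpos i c
  have hdiag : Pᴴ * P = Matrix.diagonal n := by
    ext c d
    by_cases h : c = d
    · subst h
      simp only [Matrix.mul_apply, Matrix.conjTranspose_apply, Matrix.diagonal_apply_eq,
        star_trivial]
      rw [hn]
      exact Finset.sum_congr rfl fun i _ => by
        rcases h01 i c with h | h <;> simp [h]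
    · simp only [Matrix.mul_apply, Matrix.conjTranspose_apply, Matrix.diagonal_apply_ne _ h,
        star_trivial]
      exact Finset.sum_eq_zero fun i _ => hmul0 i c d h
  -- sqrt of the diagonal matrix
  have hpsd : Matrix.PosSemidef (Matrix.diagonal fun c => Real.sqrt (n c)) :=
    Matrix.posSemidef_diagonal_iff.mpr fun c => Real.sqrt_nonneg _
  have key : ∀ (A : Matrix (Fin C) (Fin C) ℝ) (hA : A.IsHermitian), A = diagonal n →
      (hA.eigenvectorUnitary.1 * diagonal ((RCLike.ofReal : ℝ → ℝ) ∘ (√·) ∘ hA.eigenvalues) *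
        (star hA.eigenvectorUnitary : Matrix (Fin C) (Fin C) ℝ)).trace
        = ∑ c, Real.sqrt (n c) := by
    intro A hA hAn
    rw [Matrix.trace_mul_comm, ← mul_assoc]
    rw [Unitary.coe_star_mul_self, one_mul, Matrix.trace_diagonal]
    have hm : univ.val.map hA.eigenvalues = univ.val.map n := by
      have := hA.roots_charpoly_eq_eigenvalues
      subst hAn
      rw [charpoly_diagonal, Polynomial.roots_prod _ _ (by
        simp [Finset.prod_ne_zero_iff, Polynomial.X_sub_C_ne_zero])] at this
      simpa using this.symm
    rw [Finset.sum_eq_multiset_sum, Finset.sum_eq_multiset_sum]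
    have := congrArg (fun m => (m.map Real.sqrt).sum) hm
    simpa [Multiset.map_map, Function.comp_def] using this
  have hLHS : nuclearNorm P = ∑ c, Real.sqrt (n c) := by
    rw [nuclearNorm]; exact key _ _ hdiag
  rw [hLHS, CWS]
  have hCne : (C : ℝ) ≠ 0 := Nat.cast_ne_zero.mpr hC.ne'
  rw [← mul_assoc, mul_one_div_cancel hCne, one_mul]
  refine Finset.sum_congr rfl fun c _ => ?_
  have hnum : ∑ i, (P i c) ^ 2 = n c := Finset.sum_congr rfl fun i _ => hsq i c
  rw [hnum]
  show Real.sqrt (n c) = n c / (n c) ^ ((1 : ℝ)/2)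
  rcases eq_or_lt_of_le (hnnn c) with h | h
  · rw [← h]; simp
  · rw [Real.sqrt_eq_rpow, eq_div_iff (Real.rpow_pos_of_pos h _).ne',
      ← Real.rpow_add h]
    norm_num
end
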